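/- arXiv:1807.06733 — 5 statements merged into one kernel-verified Lean document; each statement's English description precedes it below -/
import Mathlib

section
/- Let C be a triangulated category with split idempotents and let X be a cluster-tilting subcategory of C. Then the additive quotient category C/X is an abelian category. -/
open CategoryTheory CategoryTheory.Limits CategoryTheory.Pretriangulated

universe v u

variable {C : Type u} [Category.{v} C] [Preadditive C] [HasZeroObject C]
  [HasShift C ℤ] [∀ n : ℤ, (shiftFunctor C n).Additive] [Pretriangulated C]

/-- `f` factors through an object satisfying `X`. -/
def FactorsThru (X : C → Prop) {A B : C} (f : A ⟶ B) : Prop :=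
  ∃ (X₀ : C) (g : A ⟶ X₀) (h : X₀ ⟶ B), X X₀ ∧ g ≫ h = f

/-- The hom relation on `C` identifying two morphisms when their difference factors
through an object of `X`; the quotient category `C/X` is the quotient by this relation. -/
def homRelOf (X : C → Prop) : HomRel C :=
  fun {A B : C} (f g : A ⟶ B) => FactorsThru X (f - g)

/-- The additive quotient category `C/X`. -/
abbrev QuotCat (X : C → Prop) := CategoryTheory.Quotient (homRelOf X)

/-- The quotient functor `C ⥤ C/X`, sending a morphism `f` to its class `f̄`. -/
abbrev quotFunctor (X : C → Prop) : C ⥤ QuotCat X := Quotient.functor _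

/-- `X` is a full additive subcategory: it contains the zero objects and is closed under
isomorphisms, finite direct sums and direct summands. -/
structure IsAdditiveClosed (X : C → Prop) : Prop where
  zero : ∀ Z : C, IsZero Z → X Z
  iso : ∀ {A B : C}, (A ≅ B) → X A → X B
  biprod : ∀ {A B : C} (b : BinaryBicone A B), Nonempty b.IsBilimit → X A → X B → X b.pt
  summand : ∀ {A B : C} (i : A ⟶ B) (p : B ⟶ A), i ≫ p = 𝟙 A → X B → X A

/-- `X` is a cluster-tilting subcategory of the triangulated category `C`:
it is a full additive subcategory such that (i) `Hom(X₁, ΣX₂) = 0` for all `X₁, X₂ ∈ X`, and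
(ii) every object `A` fits into a distinguished triangle `X₀ ⟶ X₁ ⟶ A ⟶ ΣX₀` with
`X₀, X₁ ∈ X`. -/
structure IsClusterTilting (X : C → Prop) extends IsAdditiveClosed X : Prop where
  hom_shift_zero : ∀ {X₁ X₂ : C}, X X₁ → X X₂ → ∀ f : X₁ ⟶ X₂⟦(1 : ℤ)⟧, f = 0
  exists_triangle : ∀ A : C, ∃ (X₀ X₁ : C) (f : X₀ ⟶ X₁) (g : X₁ ⟶ A) (h : A ⟶ X₀⟦(1 : ℤ)⟧),
    X X₀ ∧ X X₁ ∧ Triangle.mk f g h ∈ distTriang C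

/-- `f : A ⟶ B` is `X`-monic: every morphism from `A` to an object of `X` factors through `f`. -/
def XMonic (X : C → Prop) {A B : C} (f : A ⟶ B) : Prop :=
  ∀ X' : C, X X' → ∀ u : A ⟶ X', ∃ v : B ⟶ X', f ≫ v = u

/-- `f : A ⟶ B` is `X`-epic: every morphism from an object of `X` to `B` factors through `f`. -/
def XEpic (X : C → Prop) {A B : C} (f : A ⟶ B) : Prop :=
  ∀ X' : C, X X' → ∀ u : X' ⟶ B, ∃ v : X' ⟶ A, v ≫ f = u

set_option linter.unusedSectionVars false

section CTAux

open ZeroObject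

variable {X : C → Prop}

lemma ct_fac_mid {A W B : C} (hW : X W) (a : A ⟶ W) (b : W ⟶ B) :
    FactorsThru X (a ≫ b) := ⟨W, a, b, hW, rfl⟩

lemma ct_fac_zero (hX : IsClusterTilting X) {A B : C} :
    FactorsThru X (0 : A ⟶ B) :=
  ⟨0, 0, 0, hX.zero _ (isZero_zero C), by simp⟩

lemma ct_fac_pre {A' A B : C} (g : A' ⟶ A) {f : A ⟶ B} (hf : FactorsThru X f) :
    FactorsThru X (g ≫ f) := by
  obtain ⟨W, a, b, hW, rfl⟩ := hf
  exact ⟨W, g ≫ a, b, hW, by simp⟩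

lemma ct_fac_post {A B B' : C} (g : B ⟶ B') {f : A ⟶ B} (hf : FactorsThru X f) :
    FactorsThru X (f ≫ g) := by
  obtain ⟨W, a, b, hW, rfl⟩ := hf
  exact ⟨W, a, b ≫ g, hW, by simp⟩

lemma ct_X_biprod (hX : IsClusterTilting X) {W₁ W₂ : C} (h₁ : X W₁) (h₂ : X W₂) :
    X (W₁ ⊞ W₂) :=
  hX.biprod _ ⟨BinaryBiproduct.isBilimit _ _⟩ h₁ h₂

lemma ct_fac_add (hX : IsClusterTilting X) {A B : C} {f g : A ⟶ B}
    (hf : FactorsThru X f) (hg : FactorsThru X g) : FactorsThru X (f + g) := by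
  obtain ⟨W₁, a₁, b₁, hW₁, rfl⟩ := hf
  obtain ⟨W₂, a₂, b₂, hW₂, rfl⟩ := hg
  exact ⟨W₁ ⊞ W₂, biprod.lift a₁ a₂, biprod.desc b₁ b₂, ct_X_biprod hX hW₁ hW₂,
    by simp [biprod.lift_desc]⟩

lemma ct_fac_neg {A B : C} {f : A ⟶ B} (hf : FactorsThru X f) : FactorsThru X (-f) := by
  obtain ⟨W, a, b, hW, rfl⟩ := hf
  exact ⟨W, a, -b, hW, by simp⟩

lemma ct_fac_sub (hX : IsClusterTilting X) {A B : C} {f g : A ⟶ B}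
    (hf : FactorsThru X f) (hg : FactorsThru X g) : FactorsThru X (f - g) := by
  rw [sub_eq_add_neg]; exact ct_fac_add hX hf (ct_fac_neg hg)

lemma ct_congruence (hX : IsClusterTilting X) : Congruence (homRelOf X) where
  equivalence :=
    { refl := fun f => by show FactorsThru X _; rw [sub_self]; exact ct_fac_zero hX
      symm := fun {f g} h => by
        show FactorsThru X _
        rw [show g - f = -(f - g) by abel]
        exact ct_fac_neg h
      trans := fun {f g h} h₁ h₂ => by
        show FactorsThru X _
        rw [show f - h = (f - g) + (g - h) by abel]
        exact ct_fac_add hX h₁ h₂ }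
  comp_left := by
    intro P Q R f g g' h
    show FactorsThru X _
    rw [← Preadditive.comp_sub]
    exact ct_fac_pre f h
  comp_right := by
    intro P Q R f f' g h
    show FactorsThru X _
    rw [← Preadditive.sub_comp]
    exact ct_fac_post g h

lemma ct_hom_to_shift_fac_zero (hX : IsClusterTilting X) {T W : C} (hW : X W)
    {s : T ⟶ W⟦(1:ℤ)⟧} (hs : FactorsThru X s) : s = 0 := by
  obtain ⟨W', a, b, hW', rfl⟩ := hs
  rw [hX.hom_shift_zero hW' hW b, comp_zero]

lemma ct_hom_from_negshift_zero (hX : IsClusterTilting X) {W₁ W₂ : C} (hW₁ : X W₁)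
    (hW₂ : X W₂) (s : W₁⟦(-1:ℤ)⟧ ⟶ W₂) : s = 0 := by
  apply (shiftFunctor C (1:ℤ)).map_injective
  rw [Functor.map_zero]
  have h0 : (shiftEquiv C (1:ℤ)).counitIso.inv.app W₁ ≫ (shiftFunctor C (1:ℤ)).map s = 0 :=
    hX.hom_shift_zero hW₁ hW₂ _
  exact (cancel_epi ((shiftEquiv C (1:ℤ)).counitIso.inv.app W₁)).1 (h0.trans comp_zero.symm)

lemma ct_fac_from_negshift_zero (hX : IsClusterTilting X) {W T : C} (hW : X W)
    {s : W⟦(-1:ℤ)⟧ ⟶ T} (hs : FactorsThru X s) : s = 0 := by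
  obtain ⟨W', a, b, hW', rfl⟩ := hs
  rw [ct_hom_from_negshift_zero hX hW hW' a, zero_comp]


lemma ct_fac_of_forall_shift (hX : IsClusterTilting X) {M Y : C} (m : M ⟶ Y)
    (h : ∀ W, X W → ∀ u : W ⟶ M⟦(1:ℤ)⟧, u ≫ (shiftFunctor C (1:ℤ)).map m = 0) :
    FactorsThru X m := by
  obtain ⟨X₀, X₁, x, g, hmap, hX₀, hX₁, hT⟩ := hX.exists_triangle (M⟦(1:ℤ)⟧)
  obtain ⟨n, hn⟩ := Triangle.yoneda_exact₃ _ hT ((shiftFunctor C (1:ℤ)).map m) (h X₁ hX₁ g)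
  obtain ⟨n₀, rfl⟩ := (shiftFunctor C (1:ℤ)).map_surjective n
  obtain ⟨h₀, rfl⟩ := (shiftFunctor C (1:ℤ)).map_surjective hmap
  have : m = h₀ ≫ n₀ := (shiftFunctor C (1:ℤ)).map_injective (by
    exact hn.trans ((shiftFunctor C (1:ℤ)).map_comp h₀ n₀).symm)
  rw [this]
  exact ct_fac_mid hX₀ _ _

lemma ct_fac_of_forall_shift' (hX : IsClusterTilting X) {T M : C} (w : T ⟶ M)
    (h : ∀ W, X W → ∀ u : M ⟶ W⟦(1:ℤ)⟧, w ≫ u = 0) : FactorsThru X w := by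
  obtain ⟨X₀, X₁, x, π, ω, hX₀, hX₁, hT⟩ := hX.exists_triangle M
  obtain ⟨v, hv⟩ := Triangle.coyoneda_exact₃ _ hT w (h X₀ hX₀ ω)
  rw [hv]
  exact ct_fac_mid hX₁ _ _

lemma ct_dist_of_iso_obj₁ {T : Triangle C} (hT : T ∈ distTriang C) {A : C} (e : A ≅ T.obj₁) :
    Triangle.mk (e.hom ≫ T.mor₁) T.mor₂ (T.mor₃ ≫ (shiftFunctor C (1:ℤ)).map e.inv)
      ∈ distTriang C := by
  refine isomorphic_distinguished _ hT _ ?_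
  refine Triangle.isoMk _ T e (Iso.refl _) (Iso.refl _) (by exact Category.comp_id _)
    (by exact (Category.comp_id _).trans (Category.id_comp _).symm) ?_
  simp only [Triangle.mk_mor₃, Category.assoc, Iso.refl_hom, Category.id_comp]
  change (T.mor₃ ≫ (shiftFunctor C (1:ℤ)).map e.inv) ≫ (shiftFunctor C (1:ℤ)).map e.hom = 𝟙 _ ≫ T.mor₃
  rw [Category.assoc, ← Functor.map_comp, Iso.inv_hom_id]
  simp

lemma ct_exists_left_approx (hX : IsClusterTilting X) (A : C) :
    ∃ (X₀ X₁ : C) (α : A ⟶ X₀) (a : X₀ ⟶ X₁) (b : X₁ ⟶ A⟦(1:ℤ)⟧),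
      X X₀ ∧ X X₁ ∧ (Triangle.mk α a b ∈ distTriang C) ∧
      ∀ W, X W → ∀ u : A ⟶ W, ∃ v : X₀ ⟶ W, α ≫ v = u := by
  obtain ⟨X₀, X₁, x, g, hmap, hX₀, hX₁, hT⟩ := hX.exists_triangle (A⟦(1:ℤ)⟧)
  have hT2 := ct_dist_of_iso_obj₁ (inv_rot_of_distTriang _ hT)
    ((shiftEquiv C (1:ℤ)).unitIso.app A)
  refine ⟨X₀, X₁, _, _, _, hX₀, hX₁, hT2, ?_⟩
  intro W hW u
  obtain ⟨v, hv⟩ := Triangle.yoneda_exact₂ _ (inv_rot_of_distTriang _ hT2) u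
    (ct_hom_from_negshift_zero hX hX₁ hW _)
  exact ⟨v, hv.symm⟩

lemma ct_exists_right_approx (hX : IsClusterTilting X) (B : C) :
    ∃ (X₀ X₁ : C) (x : X₀ ⟶ X₁) (π : X₁ ⟶ B) (ω : B ⟶ X₀⟦(1:ℤ)⟧),
      X X₀ ∧ X X₁ ∧ (Triangle.mk x π ω ∈ distTriang C) ∧
      ∀ W, X W → ∀ u : W ⟶ B, ∃ v : W ⟶ X₁, v ≫ π = u := by
  obtain ⟨X₀, X₁, x, π, ω, hX₀, hX₁, hT⟩ := hX.exists_triangle B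
  refine ⟨X₀, X₁, x, π, ω, hX₀, hX₁, hT, ?_⟩
  intro W hW u
  obtain ⟨v, hv⟩ := Triangle.coyoneda_exact₃ _ hT u (hX.hom_shift_zero hW hX₀ _)
  exact ⟨v, hv.symm⟩


lemma ct_nm_main (hX : IsClusterTilting X) {A B : C} (g : A ⟶ B)
    (hmono : ∀ {T : C} (s : T ⟶ A), FactorsThru X (s ≫ g) → FactorsThru X s) :
    ∃ (Cn : C) (cm : B ⟶ Cn), FactorsThru X (g ≫ cm) ∧
      ∀ {T : C} (t : T ⟶ B), FactorsThru X (t ≫ cm) →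
        ∃ m : T ⟶ A, FactorsThru X (t - m ≫ g) := by
  obtain ⟨Cn, c, γ, hT⟩ := distinguished_cocone_triangle g
  refine ⟨Cn, c, ?_, ?_⟩
  · rw [show g ≫ c = 0 from comp_distTriang_mor_zero₁₂ _ hT]
    exact ct_fac_zero hX
  intro T t ht
  obtain ⟨W, p, q, hW, hpq⟩ := ht
  have h31 : γ ≫ (shiftFunctor C (1:ℤ)).map g = 0 := comp_distTriang_mor_zero₃₁ _ hT
  set s : (W⟦(-1:ℤ)⟧) ⟶ A :=
    (shiftFunctor C (-1:ℤ)).map (q ≫ γ) ≫ (shiftEquiv C (1:ℤ)).unitIso.inv.app A with hs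
  have hsg : s ≫ g = 0 := by
    have hnat : (shiftEquiv C (1:ℤ)).unitIso.inv.app A ≫ g =
        (shiftFunctor C (-1:ℤ)).map ((shiftFunctor C (1:ℤ)).map g) ≫
          (shiftEquiv C (1:ℤ)).unitIso.inv.app B := by
      exact ((shiftEquiv C (1:ℤ)).unitIso.inv.naturality g).symm
    rw [hs]; erw [Category.assoc, hnat, ← Category.assoc, ← Functor.map_comp,
      Category.assoc, h31, comp_zero, Functor.map_zero, zero_comp]
  have hfs : FactorsThru X s := hmono s (by rw [hsg]; exact ct_fac_zero hX)
  have hs0 : s = 0 := ct_fac_from_negshift_zero hX hW hfs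
  have hqγ : q ≫ γ = 0 := by
    apply (shiftFunctor C (-1:ℤ)).map_injective
    rw [Functor.map_zero]
    have : (shiftFunctor C (-1:ℤ)).map (q ≫ γ) =
        s ≫ (shiftEquiv C (1:ℤ)).unitIso.hom.app A := by
      rw [hs]; erw [Category.assoc, Iso.inv_hom_id_app]
      exact (Category.comp_id _).symm
    rw [this, hs0, zero_comp]; rfl
  obtain ⟨q', hq'⟩ : ∃ q'' : W ⟶ B, q = q'' ≫ c := Triangle.coyoneda_exact₃ _ hT q hqγ
  have hzc : (t - p ≫ q') ≫ c = 0 := by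
    rw [Preadditive.sub_comp, Category.assoc, ← hq', hpq]
    simp
  obtain ⟨m, hm⟩ : ∃ m : T ⟶ A, t - p ≫ q' = m ≫ g :=
    Triangle.coyoneda_exact₂ _ hT _ hzc
  refine ⟨m, ?_⟩
  have : t - m ≫ g = p ≫ q' := by rw [← hm]; abel
  rw [this]
  exact ct_fac_mid hW _ _


lemma ct_ne_main (hX : IsClusterTilting X) {A B : C} (f : A ⟶ B)
    (hepi : ∀ {T : C} (s : B ⟶ T), FactorsThru X (f ≫ s) → FactorsThru X s) :
    ∃ (K : C) (km : K ⟶ A), FactorsThru X (km ≫ f) ∧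
      ∀ {T : C} (t : A ⟶ T), FactorsThru X (km ≫ t) →
        ∃ m : B ⟶ T, FactorsThru X (t - f ≫ m) := by
  obtain ⟨K, δ, h, hT1⟩ := distinguished_cocone_triangle₁ f
  refine ⟨K, δ, ?_, ?_⟩
  · rw [show δ ≫ f = 0 from comp_distTriang_mor_zero₁₂ _ hT1]
    exact ct_fac_zero hX
  intro T t ht
  obtain ⟨W, p, q, hW, hpq⟩ := ht
  have hT2 := inv_rot_of_distTriang _ hT1
  set ε : (B⟦(-1:ℤ)⟧) ⟶ K := (Triangle.mk δ f h).invRotate.mor₁ with hε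
  set sh2 : B ⟶ W⟦(1:ℤ)⟧ :=
    (shiftEquiv C (1:ℤ)).counitIso.inv.app B ≫ (shiftFunctor C (1:ℤ)).map (ε ≫ p) with hsh2
  have hmor₃ : (Triangle.mk δ f h).invRotate.mor₃ =
      f ≫ (shiftEquiv C (1:ℤ)).counitIso.inv.app B := rfl
  have hfsh2 : f ≫ sh2 = 0 := by
    have h31 := comp_distTriang_mor_zero₃₁ _ hT2
    rw [hmor₃, ← hε] at h31
    rw [hsh2]; erw [Functor.map_comp]
    calc f ≫ (shiftEquiv C (1:ℤ)).counitIso.inv.app B ≫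
          (shiftFunctor C (1:ℤ)).map ε ≫ (shiftFunctor C (1:ℤ)).map p
        = ((f ≫ (shiftEquiv C (1:ℤ)).counitIso.inv.app B) ≫ (shiftFunctor C (1:ℤ)).map ε) ≫
            (shiftFunctor C (1:ℤ)).map p := by
          exact ((Category.assoc _ _ _).trans (Category.assoc _ _ _)).symm
      _ = 0 := by erw [h31, zero_comp]
  have hsh20 : sh2 = 0 :=
    ct_hom_to_shift_fac_zero hX hW (hepi sh2 (by rw [hfsh2]; exact ct_fac_zero hX))
  have hεp : ε ≫ p = 0 := by
    apply (shiftFunctor C (1:ℤ)).map_injective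
    rw [Functor.map_zero]
    exact (cancel_epi ((shiftEquiv C (1:ℤ)).counitIso.inv.app B)).1 (hsh20.trans comp_zero.symm)
  obtain ⟨e, he⟩ : ∃ e : A ⟶ W, p = δ ≫ e := Triangle.yoneda_exact₂ _ hT2 p hεp
  obtain ⟨m, hm⟩ : ∃ m : B ⟶ T, t - e ≫ q = f ≫ m := by
    apply Triangle.yoneda_exact₂ _ hT1
    show δ ≫ (t - e ≫ q) = 0
    rw [Preadditive.comp_sub, ← Category.assoc, ← he, hpq]
    simp
  refine ⟨m, ?_⟩
  have : t - f ≫ m = e ≫ q := by rw [← hm]; abel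
  rw [this]
  exact ct_fac_mid hW _ _


lemma ct_coker_main (hX : IsClusterTilting X) {A B : C} (f : A ⟶ B) :
    ∃ (Cn : C) (cm : B ⟶ Cn),
      FactorsThru X (f ≫ cm) ∧
      (∀ {Y : C} (g : B ⟶ Y), FactorsThru X (f ≫ g) →
        ∃ m : Cn ⟶ Y, FactorsThru X (g - cm ≫ m)) ∧
      (∀ {Y : C} (m : Cn ⟶ Y), FactorsThru X (cm ≫ m) → FactorsThru X m) := by
  obtain ⟨X₀, X₁, α, a, b, hX₀, hX₁, hTA, happrox⟩ := ct_exists_left_approx hX A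
  obtain ⟨Cn, c, γ, hT1⟩ := distinguished_cocone_triangle (biprod.lift f α)
  refine ⟨Cn, biprod.inl ≫ c, ?_, ?_, ?_⟩
  · have h12 : biprod.lift f α ≫ c = 0 := comp_distTriang_mor_zero₁₂ _ hT1
    rw [biprod.lift_eq, Preadditive.add_comp, Category.assoc, Category.assoc] at h12
    have key : f ≫ (biprod.inl ≫ c) = α ≫ (-(biprod.inr ≫ c)) := by
      rw [Preadditive.comp_neg]
      exact eq_neg_of_add_eq_zero_left h12
    rw [key]
    exact ct_fac_mid hX₀ _ _
  · intro Y g hg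
    obtain ⟨W, p, q, hW, hpq⟩ := hg
    obtain ⟨v, hv⟩ := happrox W hW p
    have hG : biprod.lift f α ≫ biprod.desc g (-(v ≫ q)) = 0 := by
      rw [biprod.lift_desc, Preadditive.comp_neg, ← Category.assoc, hv, hpq]
      simp
    obtain ⟨m, hm⟩ : ∃ m : Cn ⟶ Y, biprod.desc g (-(v ≫ q)) = c ≫ m :=
      Triangle.yoneda_exact₂ _ hT1 _ hG
    refine ⟨m, ?_⟩
    have hz : g - (biprod.inl ≫ c) ≫ m = 0 := by
      have h2 := congrArg (fun z => biprod.inl ≫ z) hm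
      simp only [biprod.inl_desc] at h2
      rw [Category.assoc, ← h2]
      simp
    rw [hz]
    exact ct_fac_zero hX
  · intro Y m hm
    have h2 : FactorsThru X (c ≫ m) := by
      have hsum : c ≫ m = biprod.fst ≫ ((biprod.inl ≫ c) ≫ m) +
          biprod.snd ≫ ((biprod.inr ≫ c) ≫ m) := by
        calc c ≫ m = (biprod.fst ≫ biprod.inl + biprod.snd ≫ biprod.inr) ≫ (c ≫ m) := by
              rw [biprod.total, Category.id_comp]
          _ = _ := by
              simp only [← Category.assoc, ← Preadditive.add_comp, biprod.total,
                Category.id_comp]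
      rw [hsum]
      exact ct_fac_add hX (ct_fac_pre _ hm) (ct_fac_mid hX₀ _ _)
    obtain ⟨W', P, Q, hW', hPQ⟩ := h2
    obtain ⟨d, hd₁, hd₂⟩ := complete_distinguished_triangle_morphism _ _ hT1 hTA (𝟙 A)
      biprod.snd (by exact (biprod.lift_snd _ _).trans (Category.id_comp _).symm)
    have hγ : γ = d ≫ b := (Category.comp_id γ).symm.trans
      ((congrArg (γ ≫ ·) ((shiftFunctor C (1:ℤ)).map_id A).symm).trans hd₂)
    apply ct_fac_of_forall_shift hX m
    intro W'' hW'' u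
    have h3 : u ≫ (shiftFunctor C (1:ℤ)).map γ = 0 := by
      rw [hγ]; erw [Functor.map_comp, ← Category.assoc,
        hX.hom_shift_zero hW'' hX₁ (u ≫ (shiftFunctor C (1:ℤ)).map d), zero_comp]
    obtain ⟨u', hu'⟩ : ∃ u' : W'' ⟶ (B ⊞ X₀)⟦(1:ℤ)⟧,
        u = u' ≫ (-((shiftFunctor C (1:ℤ)).map c)) :=
      Triangle.coyoneda_exact₁ _ (rot_of_distTriang _ (rot_of_distTriang _ hT1)) u h3
    have hcm : (shiftFunctor C (1:ℤ)).map c ≫ (shiftFunctor C (1:ℤ)).map m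
        = (shiftFunctor C (1:ℤ)).map P ≫ (shiftFunctor C (1:ℤ)).map Q := by
      rw [← Functor.map_comp, ← Functor.map_comp, hPQ]
    rw [hu', Category.assoc, Preadditive.neg_comp, hcm, Preadditive.comp_neg,
      ← Category.assoc, hX.hom_shift_zero hW'' hW' (u' ≫ (shiftFunctor C (1:ℤ)).map P),
      zero_comp, neg_zero]

lemma ct_ker_main (hX : IsClusterTilting X) {A B : C} (f : A ⟶ B) :
    ∃ (K : C) (km : K ⟶ A),
      FactorsThru X (km ≫ f) ∧
      (∀ {T : C} (t : T ⟶ A), FactorsThru X (t ≫ f) →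
        ∃ w : T ⟶ K, FactorsThru X (t - w ≫ km)) ∧
      (∀ {T : C} (w : T ⟶ K), FactorsThru X (w ≫ km) → FactorsThru X w) := by
  obtain ⟨X₀, X₁, x, π, ω, hX₀, hX₁, hTB, happrox⟩ := ct_exists_right_approx hX B
  obtain ⟨K, k, h, hT1⟩ := distinguished_cocone_triangle₁ (biprod.desc f π)
  refine ⟨K, k ≫ biprod.fst, ?_, ?_, ?_⟩
  · have h12 : k ≫ biprod.desc f π = 0 := comp_distTriang_mor_zero₁₂ _ hT1
    rw [biprod.desc_eq, Preadditive.comp_add, ← Category.assoc, ← Category.assoc] at h12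
    have key : (k ≫ biprod.fst) ≫ f = -((k ≫ biprod.snd) ≫ π) :=
      eq_neg_of_add_eq_zero_left h12
    rw [key]
    exact ct_fac_neg (ct_fac_mid hX₁ _ _)
  · intro T t ht
    obtain ⟨W, p, q, hW, hpq⟩ := ht
    obtain ⟨v, hv⟩ := happrox W hW q
    have hτ : biprod.lift t (-(p ≫ v)) ≫ biprod.desc f π = 0 := by
      rw [biprod.lift_desc, Preadditive.neg_comp, Category.assoc, hv, hpq]
      simp
    obtain ⟨w, hw⟩ : ∃ w : T ⟶ K, biprod.lift t (-(p ≫ v)) = w ≫ k :=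
      Triangle.coyoneda_exact₂ _ hT1 _ hτ
    refine ⟨w, ?_⟩
    have hz : t - w ≫ (k ≫ biprod.fst) = 0 := by
      rw [← Category.assoc, ← hw, biprod.lift_fst]
      simp
    rw [hz]
    exact ct_fac_zero hX
  · intro T w hw
    have hwk : FactorsThru X (w ≫ k) := by
      have hsum : w ≫ k = (w ≫ (k ≫ biprod.fst)) ≫ biprod.inl +
          (w ≫ (k ≫ biprod.snd)) ≫ biprod.inr := by
        calc w ≫ k = (w ≫ k) ≫ (biprod.fst ≫ biprod.inl + biprod.snd ≫ biprod.inr) := by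
              rw [biprod.total, Category.comp_id]
          _ = _ := by
              simp only [Preadditive.comp_add, ← Category.assoc]
      rw [hsum]
      exact ct_fac_add hX (ct_fac_post _ hw) (ct_fac_mid hX₁ _ _)
    obtain ⟨W', P, Q, hW', hPQ⟩ := hwk
    obtain ⟨ψ, hψ₁, hψ₂⟩ := complete_distinguished_triangle_morphism₁ _ _ hTB hT1
      biprod.inr (𝟙 B) (by exact (Category.comp_id _).trans (biprod.inr_desc _ _).symm)
    have hωψ : ω ≫ (shiftFunctor C (1:ℤ)).map ψ = h := hψ₂.trans (Category.id_comp _)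
    apply ct_fac_of_forall_shift' hX w
    intro W'' hW'' u
    have h1 : h ≫ (shiftFunctor C (1:ℤ)).map u = 0 := by
      rw [← hωψ]; erw [Category.assoc, ← Functor.map_comp,
        hX.hom_shift_zero hX₀ hW'' (ψ ≫ u), Functor.map_zero, comp_zero]
    obtain ⟨g, hg⟩ : ∃ g : (A ⊞ X₁)⟦(1:ℤ)⟧ ⟶ (W''⟦(1:ℤ)⟧)⟦(1:ℤ)⟧,
        (shiftFunctor C (1:ℤ)).map u = (-((shiftFunctor C (1:ℤ)).map k)) ≫ g :=
      Triangle.yoneda_exact₂ _ (rot_of_distTriang _ (rot_of_distTriang _ hT1))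
        ((shiftFunctor C (1:ℤ)).map u) h1
    obtain ⟨g₀, rfl⟩ := (shiftFunctor C (1:ℤ)).map_surjective g
    apply (shiftFunctor C (1:ℤ)).map_injective
    have hwk2 : (shiftFunctor C (1:ℤ)).map w ≫ (shiftFunctor C (1:ℤ)).map k
        = (shiftFunctor C (1:ℤ)).map P ≫ (shiftFunctor C (1:ℤ)).map Q := by
      rw [← Functor.map_comp, ← Functor.map_comp, hPQ]
    have hQg : (shiftFunctor C (1:ℤ)).map Q ≫ (shiftFunctor C (1:ℤ)).map g₀ = 0 := by
      rw [← Functor.map_comp, hX.hom_shift_zero hW' hW'' (Q ≫ g₀), Functor.map_zero]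
    rw [Functor.map_zero, Functor.map_comp, hg, Preadditive.neg_comp, Preadditive.comp_neg,
      ← Category.assoc, hwk2, Category.assoc, hQg, comp_zero, neg_zero]

end CTAux

open ZeroObject

/-- If `C` is a triangulated category with split idempotents and `X` is a
cluster-tilting subcategory of `C`, then the additive quotient category `C/X` is abelian. -/
theorem quotient_by_cluster_tilting_is_abelian [IsIdempotentComplete C]
    (X : C → Prop) (hX : IsClusterTilting X) :
    Nonempty (Abelian (QuotCat X)) := by
  haveI : Congruence (homRelOf X) := ct_congruence hX
  have hadd : ∀ ⦃P Q : C⦄ (f₁ f₂ g₁ g₂ : P ⟶ Q), homRelOf X f₁ f₂ → homRelOf X g₁ g₂ →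
      homRelOf X (f₁ + g₁) (f₂ + g₂) := by
    intro P Q f₁ f₂ g₁ g₂ h₁ h₂
    show FactorsThru X _
    rw [show f₁ + g₁ - (f₂ + g₂) = (f₁ - f₂) + (g₁ - g₂) by abel]
    exact ct_fac_add hX h₁ h₂
  letI : Preadditive (QuotCat X) := Quotient.preadditive _ hadd
  haveI : (quotFunctor X).Additive := Quotient.functor_additive _ hadd
  have hsurj : ∀ {P Q : QuotCat X} (φ : P ⟶ Q), ∃ f : P.as ⟶ Q.as,
      φ = (quotFunctor X).map f := by
    intro P Q φ
    obtain ⟨f, hf⟩ := Quot.exists_rep φ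
    exact ⟨f, hf.symm⟩
  have hsurj₁ : ∀ {W' : QuotCat X} {PP : C} (g' : W' ⟶ (quotFunctor X).obj PP),
      ∃ t : W'.as ⟶ PP, g' = (quotFunctor X).map t := fun g' => hsurj g'
  have hsurj₂ : ∀ {PP : C} {W' : QuotCat X} (g' : (quotFunctor X).obj PP ⟶ W'),
      ∃ t : PP ⟶ W'.as, g' = (quotFunctor X).map t := fun g' => hsurj g'
  have heq : ∀ {P Q : C} (f g : P ⟶ Q),
      (quotFunctor X).map f = (quotFunctor X).map g ↔ FactorsThru X (f - g) :=
    fun f g => Quotient.functor_map_eq_iff _ _ _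
  have hzero : ∀ {P Q : C} (f : P ⟶ Q), (quotFunctor X).map f = 0 ↔ FactorsThru X f := by
    intro P Q f
    rw [show (0 : (quotFunctor X).obj P ⟶ (quotFunctor X).obj Q) = (quotFunctor X).map 0 from
      (Functor.map_zero _ _ _).symm, heq, sub_zero]
  haveI : HasZeroObject (QuotCat X) := by
    refine ⟨(quotFunctor X).obj 0, ?_⟩
    rw [IsZero.iff_id_eq_zero,
      show 𝟙 ((quotFunctor X).obj 0) = (quotFunctor X).map (𝟙 (0:C)) from
        ((quotFunctor X).map_id (0:C)).symm, hzero]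
    rw [show (𝟙 (0:C)) = (0 : (0:C) ⟶ (0:C)) from (isZero_zero C).eq_of_src _ _]
    exact ct_fac_zero hX
  haveI : HasBinaryBiproducts (QuotCat X) := by
    constructor
    intro P Q
    apply HasBinaryBiproduct.mk
    exact
      { bicone :=
        { pt := (quotFunctor X).obj (P.as ⊞ Q.as)
          fst := (quotFunctor X).map biprod.fst
          snd := (quotFunctor X).map biprod.snd
          inl := (quotFunctor X).map biprod.inl
          inr := (quotFunctor X).map biprod.inr
          inl_fst := by
            rw [← Functor.map_comp, biprod.inl_fst]; exact (quotFunctor X).map_id _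
          inl_snd := by rw [← Functor.map_comp, biprod.inl_snd, Functor.map_zero]
          inr_fst := by rw [← Functor.map_comp, biprod.inr_fst, Functor.map_zero]
          inr_snd := by
            rw [← Functor.map_comp, biprod.inr_snd]; exact (quotFunctor X).map_id _ }
        isBilimit := isBinaryBilimitOfTotal _ (by
          dsimp only
          rw [← (quotFunctor X).map_id, ← biprod.total, Functor.map_add]
          simp only [Functor.map_comp]) }
  haveI : HasFiniteProducts (QuotCat X) := hasFiniteProducts_of_has_binary_and_terminal
  haveI : HasKernels (QuotCat X) := by
    constructor
    intro P Q φ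
    obtain ⟨f, rfl⟩ := hsurj φ
    obtain ⟨K, km, h1, h2, h3⟩ := ct_ker_main hX f
    have hker : ∀ {W' : QuotCat X} (g' : W' ⟶ (quotFunctor X).obj P.as),
        g' ≫ (quotFunctor X).map f = 0 → ∃ l : W' ⟶ (quotFunctor X).obj K,
          l ≫ (quotFunctor X).map km = g' := by
      intro W' g' hg'
      obtain ⟨t, rfl⟩ := hsurj₁ g'
      rw [← Functor.map_comp] at hg'
      obtain ⟨w, hw⟩ := h2 t ((hzero _).1 hg')
      refine ⟨(quotFunctor X).map w, ?_⟩
      rw [← Functor.map_comp, heq, show w ≫ km - t = -(t - w ≫ km) by abel]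
      exact ct_fac_neg hw
    have huniq : ∀ {T' : QuotCat X} (e₁ e₂ : T' ⟶ (quotFunctor X).obj K),
        e₁ ≫ (quotFunctor X).map km = e₂ ≫ (quotFunctor X).map km → e₁ = e₂ := by
      intro T' e₁ e₂ hee
      obtain ⟨w₁, rfl⟩ := hsurj₁ e₁
      obtain ⟨w₂, rfl⟩ := hsurj₁ e₂
      rw [← Functor.map_comp, ← Functor.map_comp, heq] at hee
      rw [heq]
      refine h3 (w₁ - w₂) ?_
      rw [Preadditive.sub_comp]
      exact hee
    exact HasLimit.mk ⟨KernelFork.ofι ((quotFunctor X).map km)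
        (by rw [← Functor.map_comp]; exact (hzero _).2 h1),
      KernelFork.IsLimit.ofι _ _
        (fun {W'} g' hg' => (hker g' hg').choose)
        (fun {W'} g' hg' => (hker g' hg').choose_spec)
        (fun {W'} g' hg' l hl => huniq _ _
          (by rw [hl, (hker g' hg').choose_spec]))⟩
  haveI : HasCokernels (QuotCat X) := by
    constructor
    intro P Q φ
    obtain ⟨f, rfl⟩ := hsurj φ
    obtain ⟨Cn, cm, h1, h2, h3⟩ := ct_coker_main hX f
    have hcok : ∀ {W' : QuotCat X} (g' : (quotFunctor X).obj Q.as ⟶ W'),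
        (quotFunctor X).map f ≫ g' = 0 → ∃ l : (quotFunctor X).obj Cn ⟶ W',
          (quotFunctor X).map cm ≫ l = g' := by
      intro W' g' hg'
      obtain ⟨t, rfl⟩ := hsurj₂ g'
      rw [← Functor.map_comp] at hg'
      obtain ⟨m, hm⟩ := h2 t ((hzero _).1 hg')
      refine ⟨(quotFunctor X).map m, ?_⟩
      rw [← Functor.map_comp, heq, show cm ≫ m - t = -(t - cm ≫ m) by abel]
      exact ct_fac_neg hm
    have huniq : ∀ {T' : QuotCat X} (e₁ e₂ : (quotFunctor X).obj Cn ⟶ T'),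
        (quotFunctor X).map cm ≫ e₁ = (quotFunctor X).map cm ≫ e₂ → e₁ = e₂ := by
      intro T' e₁ e₂ hee
      obtain ⟨m₁, rfl⟩ := hsurj₂ e₁
      obtain ⟨m₂, rfl⟩ := hsurj₂ e₂
      rw [← Functor.map_comp, ← Functor.map_comp, heq] at hee
      rw [heq]
      refine h3 (m₁ - m₂) ?_
      rw [Preadditive.comp_sub]
      exact hee
    exact HasColimit.mk ⟨CokernelCofork.ofπ ((quotFunctor X).map cm)
        (by rw [← Functor.map_comp]; exact (hzero _).2 h1),
      CokernelCofork.IsColimit.ofπ _ _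
        (fun {W'} g' hg' => (hcok g' hg').choose)
        (fun {W'} g' hg' => (hcok g' hg').choose_spec)
        (fun {W'} g' hg' l hl => huniq _ _
          (by rw [hl, (hcok g' hg').choose_spec]))⟩
  letI : IsNormalMonoCategory (QuotCat X) := by
    constructor
    intro P Q φ hφ
    have hg := (hsurj φ).choose_spec
    set g := (hsurj φ).choose with hgdef
    rw [hg]
    haveI : Mono ((quotFunctor X).map g) := hg ▸ hφ
    have hmono : ∀ {T : C} (s : T ⟶ P.as), FactorsThru X (s ≫ g) → FactorsThru X s := by
      intro T s hs
      have h1 : (quotFunctor X).map s ≫ (quotFunctor X).map g =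
          (0 : (quotFunctor X).obj T ⟶ (quotFunctor X).obj P.as) ≫ (quotFunctor X).map g := by
        rw [← Functor.map_comp, zero_comp]
        exact (hzero _).2 hs
      exact (hzero _).1 ((cancel_mono ((quotFunctor X).map g)).1 h1)
    have hnm := ct_nm_main hX g hmono
    set Cn := hnm.choose with hCn
    set cm := hnm.choose_spec.choose with hcm
    have h1 : FactorsThru X (g ≫ cm) := hnm.choose_spec.choose_spec.1
    have h2 : ∀ {T : C} (t : T ⟶ Q.as), FactorsThru X (t ≫ cm) →
        ∃ m : T ⟶ P.as, FactorsThru X (t - m ≫ g) := hnm.choose_spec.choose_spec.2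
    have hlift : ∀ {W' : QuotCat X} (t' : W' ⟶ (quotFunctor X).obj Q.as),
        t' ≫ (quotFunctor X).map cm = 0 → ∃ l : W' ⟶ (quotFunctor X).obj P.as,
          l ≫ (quotFunctor X).map g = t' := by
      intro W' t' ht'
      obtain ⟨t, rfl⟩ := hsurj₁ t'
      rw [← Functor.map_comp] at ht'
      obtain ⟨m, hm⟩ := h2 t ((hzero _).1 ht')
      refine ⟨(quotFunctor X).map m, ?_⟩
      rw [← Functor.map_comp, heq, show m ≫ g - t = -(t - m ≫ g) by abel]
      exact ct_fac_neg hm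
    exact ⟨
      { Z := (quotFunctor X).obj Cn
        g := (quotFunctor X).map cm
        w := by rw [← Functor.map_comp]; exact (hzero _).2 h1
        isLimit := KernelFork.IsLimit.ofι _ _
          (fun {W'} t' ht' => (hlift t' ht').choose)
          (fun {W'} t' ht' => (hlift t' ht').choose_spec)
          (fun {W'} t' ht' l hl => (cancel_mono ((quotFunctor X).map g)).1
            (by rw [hl, (hlift t' ht').choose_spec])) }⟩
  letI : IsNormalEpiCategory (QuotCat X) := by
    constructor
    intro P Q φ hφ
    have hf := (hsurj φ).choose_spec
    set f := (hsurj φ).choose with hfdef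
    rw [hf]
    haveI : Epi ((quotFunctor X).map f) := hf ▸ hφ
    have hepi : ∀ {T : C} (s : Q.as ⟶ T), FactorsThru X (f ≫ s) → FactorsThru X s := by
      intro T s hs
      have h1 : (quotFunctor X).map f ≫ (quotFunctor X).map s =
          (quotFunctor X).map f ≫ (0 : (quotFunctor X).obj Q.as ⟶ (quotFunctor X).obj T) := by
        rw [← Functor.map_comp, comp_zero]
        exact (hzero _).2 hs
      exact (hzero _).1 ((cancel_epi ((quotFunctor X).map f)).1 h1)
    have hne := ct_ne_main hX f hepi
    set K := hne.choose with hK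
    set km := hne.choose_spec.choose with hkm
    have h1 : FactorsThru X (km ≫ f) := hne.choose_spec.choose_spec.1
    have h2 : ∀ {T : C} (t : P.as ⟶ T), FactorsThru X (km ≫ t) →
        ∃ m : Q.as ⟶ T, FactorsThru X (t - f ≫ m) := hne.choose_spec.choose_spec.2
    have hdesc : ∀ {W' : QuotCat X} (t' : (quotFunctor X).obj P.as ⟶ W'),
        (quotFunctor X).map km ≫ t' = 0 → ∃ l : (quotFunctor X).obj Q.as ⟶ W',
          (quotFunctor X).map f ≫ l = t' := by
      intro W' t' ht'
      obtain ⟨t, rfl⟩ := hsurj₂ t'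
      rw [← Functor.map_comp] at ht'
      obtain ⟨m, hm⟩ := h2 t ((hzero _).1 ht')
      refine ⟨(quotFunctor X).map m, ?_⟩
      rw [← Functor.map_comp, heq, show f ≫ m - t = -(t - f ≫ m) by abel]
      exact ct_fac_neg hm
    exact ⟨
      { W := (quotFunctor X).obj K
        g := (quotFunctor X).map km
        w := by rw [← Functor.map_comp]; exact (hzero _).2 h1
        isColimit := CokernelCofork.IsColimit.ofπ _ _
          (fun {W'} t' ht' => (hdesc t' ht').choose)
          (fun {W'} t' ht' => (hdesc t' ht').choose_spec)
          (fun {W'} t' ht' l hl => (cancel_epi ((quotFunctor X).map f)).1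
            (by rw [hl, (hdesc t' ht').choose_spec])) }⟩
  exact ⟨Abelian.mk⟩
end

section
/- Let X be a cluster-tilting subcategory of a triangulated category C with split idempotents, and let A →f B →g D →h ΣA be a distinguished triangle in C. If ΣA lies in X, then ḡ is an epimorphism in the quotient category C/X; if A lies in X, then ḡ is a monomorphism in C/X. -/
open CategoryTheory CategoryTheory.Limits CategoryTheory.Pretriangulated

universe v u

variable {C : Type u} [Category.{v} C] [Preadditive C] [HasZeroObject C]
  [HasShift C ℤ] [∀ n : ℤ, (shiftFunctor C n).Additive] [Pretriangulated C]

section Aux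

variable {X : C → Prop}

lemma ft_zero (hX : IsAdditiveClosed X) {A B : C} : FactorsThru X (0 : A ⟶ B) := by
  obtain ⟨Z, hZ⟩ := HasZeroObject.zero (C := C)
  exact ⟨Z, 0, 0, hX.zero Z hZ, by simp⟩

lemma ft_neg (hX : IsAdditiveClosed X) {A B : C} {u : A ⟶ B} (hu : FactorsThru X u) :
    FactorsThru X (-u) := by
  obtain ⟨X₀, a, b, hX₀, hab⟩ := hu
  exact ⟨X₀, a, -b, hX₀, by simp [hab]⟩

lemma ft_add (hX : IsAdditiveClosed X) {A B : C} {u v : A ⟶ B}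
    (hu : FactorsThru X u) (hv : FactorsThru X v) : FactorsThru X (u + v) := by
  obtain ⟨X₀, a, b, hX₀, hab⟩ := hu
  obtain ⟨X₁, c, d, hX₁, hcd⟩ := hv
  refine ⟨biprod X₀ X₁, biprod.lift a c, biprod.desc b d,
    hX.biprod (BinaryBiproduct.bicone X₀ X₁) ⟨BinaryBiproduct.isBilimit X₀ X₁⟩ hX₀ hX₁, ?_⟩
  simp [hab, hcd]

lemma congruence_homRelOf (hX : IsAdditiveClosed X) : Congruence (homRelOf X) where
  equivalence := by
    intro P Q
    constructor
    · intro u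
      simpa [homRelOf] using ft_zero hX
    · intro u v huv
      have := ft_neg hX huv
      simpa [homRelOf, neg_sub] using this
    · intro u v w huv hvw
      have := ft_add hX huv hvw
      simpa [homRelOf] using this
  comp_left := by
    rintro _ _ _ f g g' ⟨X₀, a, b, hX₀, hab⟩
    exact ⟨X₀, f ≫ a, b, hX₀, by rw [Category.assoc, hab, Preadditive.comp_sub]⟩
  comp_right := by
    rintro _ _ _ f f' g ⟨X₀, a, b, hX₀, hab⟩
    exact ⟨X₀, a, b ≫ g, hX₀, by rw [← Category.assoc, hab, Preadditive.sub_comp]⟩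

end Aux

/-- For a distinguished triangle `A ⟶ B ⟶ D ⟶ ΣA` over a cluster-tilting
subcategory `X`: if `ΣA ∈ X` then `ḡ` is an epimorphism in `C/X`; if `A ∈ X` then `ḡ` is a
monomorphism in `C/X`. -/
theorem epi_of_shift_mem_and_mono_of_mem [IsIdempotentComplete C]
    (X : C → Prop) (hX : IsClusterTilting X)
    {A B D : C} (f : A ⟶ B) (g : B ⟶ D) (h : D ⟶ A⟦(1 : ℤ)⟧)
    (hT : Triangle.mk f g h ∈ distTriang C) :
    (X (A⟦(1 : ℤ)⟧) → Epi ((quotFunctor X).map g)) ∧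
    (X A → Mono ((quotFunctor X).map g)) := by
  haveI : Congruence (homRelOf X) := congruence_homRelOf hX.toIsAdditiveClosed
  constructor
  · -- epi case
    intro hSA
    -- key: if g ≫ k factors through X then k factors through X
    have key : ∀ {E : C} (k : D ⟶ E), FactorsThru X (g ≫ k) → FactorsThru X k := by
      intro E k hk
      obtain ⟨X₀, X₁, p, q, r, hX₀, hX₁, hT'⟩ := hX.exists_triangle E
      obtain ⟨X', α, β, hX', hαβ⟩ := hk
      -- β ≫ r = 0
      have hβr : β ≫ r = 0 := hX.hom_shift_zero hX' hX₀ (β ≫ r)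
      have hgkr : g ≫ (k ≫ r) = 0 := by
        rw [← Category.assoc, ← hαβ, Category.assoc, hβr, comp_zero]
      -- use rotated triangle B → D → ΣA
      obtain ⟨t, ht⟩ := Triangle.yoneda_exact₂ _ (rot_of_distTriang _ hT) (k ≫ r) hgkr
      have ht0 : t = 0 := hX.hom_shift_zero hSA hX₀ t
      have hkr : k ≫ r = 0 := ht.trans (by rw [ht0]; exact comp_zero)
      obtain ⟨m, hm⟩ := Triangle.coyoneda_exact₃ _ hT' k hkr
      exact ⟨X₁, m, q, hX₁, hm.symm⟩
    constructor
    intro Z u v huv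
    obtain ⟨k₁, rfl⟩ := (Quotient.functor (homRelOf X)).map_surjective u
    obtain ⟨k₂, rfl⟩ := (Quotient.functor (homRelOf X)).map_surjective v
    rw [← Functor.map_comp, ← Functor.map_comp,
      Quotient.functor_map_eq_iff] at huv
    have : FactorsThru X (g ≫ (k₁ - k₂)) := by
      simpa [homRelOf, Preadditive.comp_sub] using huv
    have hk := key _ this
    exact CategoryTheory.Quotient.sound _ (by simpa [homRelOf] using hk)
  · -- mono case
    intro hA
    have key : ∀ {E : C} (k : E ⟶ B), FactorsThru X (k ≫ g) → FactorsThru X k := by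
      intro E k hk
      obtain ⟨X', α, β, hX', hαβ⟩ := hk
      have hβh : β ≫ h = 0 := hX.hom_shift_zero hX' hA (β ≫ h)
      obtain ⟨γ₀, hγ₀⟩ := Triangle.coyoneda_exact₃ _ hT β hβh
      let γ : X' ⟶ B := γ₀
      have hγ : β = γ ≫ g := hγ₀
      have hkg : (k - α ≫ γ) ≫ g = 0 := by
        rw [Preadditive.sub_comp, Category.assoc, ← hγ, hαβ, sub_self]
      obtain ⟨δ₀, hδ₀⟩ := Triangle.coyoneda_exact₂ _ hT (k - α ≫ γ) hkg
      let δ : E ⟶ A := δ₀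
      have hδ : k - α ≫ γ = δ ≫ f := hδ₀
      have h1 : FactorsThru X (k - α ≫ γ) := ⟨A, δ, f, hA, hδ.symm⟩
      have h2 : FactorsThru X (α ≫ γ) := ⟨X', α, γ, hX', rfl⟩
      have := ft_add hX.toIsAdditiveClosed h1 h2
      simpa using this
    constructor
    intro Z u v huv
    obtain ⟨k₁, rfl⟩ := (Quotient.functor (homRelOf X)).map_surjective u
    obtain ⟨k₂, rfl⟩ := (Quotient.functor (homRelOf X)).map_surjective v
    rw [← Functor.map_comp, ← Functor.map_comp,
      Quotient.functor_map_eq_iff] at huv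
    have : FactorsThru X ((k₁ - k₂) ≫ g) := by
      simpa [homRelOf, Preadditive.sub_comp] using huv
    have hk := key _ this
    exact CategoryTheory.Quotient.sound _ (by simpa [homRelOf] using hk)
end

section
/- Let X be a cluster-tilting subcategory of a triangulated category C with split idempotents, and let A₀ →f₀ A₁ →f₁ A₂ →f₂ ΣA₀ be a distinguished triangle in C. If both f₂ and Σ⁻¹f₂ factor through objects of X, then 0 → A₀ →f̄₀ A₁ →f̄₁ A₂ → 0 is a short exact sequence in the abelian quotient category C/X: f̄₀ is a monomorphism, f̄₁ is an epimorphism, f̄₀ is a kernel of f̄₁, and f̄₁ is a cokernel of f̄₀. -/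
open CategoryTheory CategoryTheory.Limits CategoryTheory.Pretriangulated
open CategoryTheory.Preadditive

universe v u

variable {C : Type u} [Category.{v} C] [Preadditive C] [HasZeroObject C]
  [HasShift C ℤ] [∀ n : ℤ, (shiftFunctor C n).Additive] [Pretriangulated C]

/-- Any morphism `P⟦-1⟧ ⟶ Q` between (shifted) objects of a cluster-tilting subcategory
vanishes. -/
lemma IsClusterTilting.negShift_hom_zero (X : C → Prop) (hX : IsClusterTilting X)
    {P Q : C} (hP : X P) (hQ : X Q) (t : P⟦(-1 : ℤ)⟧ ⟶ Q) : t = 0 := by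
  have h1 : (shiftFunctorCompIsoId C (-1 : ℤ) (1 : ℤ) (by omega)).inv.app P ≫ t⟦(1 : ℤ)⟧' = 0 :=
    hX.hom_shift_zero hP hQ _
  have h2 : t⟦(1 : ℤ)⟧' = 0 := by
    rw [← cancel_epi ((shiftFunctorCompIsoId C (-1 : ℤ) (1 : ℤ) (by omega)).inv.app P), comp_zero]
    exact h1
  have h3 := shift_shift_neg' t (1 : ℤ)
  rw [h2, Functor.map_zero] at h3
  simpa using h3.symm

/-- Every object admits a distinguished triangle `Z ⟶ X₀' ⟶ X₁' ⟶ Z⟦1⟧` with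
`X₀', X₁'` in the cluster-tilting subcategory. -/
lemma IsClusterTilting.exists_approx_triangle (X : C → Prop) (hX : IsClusterTilting X) (Z : C) :
    ∃ (X₀' X₁' : C) (ε : Z ⟶ X₀') (c : X₀' ⟶ X₁') (σ : X₁' ⟶ Z⟦(1 : ℤ)⟧),
      X X₀' ∧ X X₁' ∧ Triangle.mk ε c σ ∈ distTriang C := by
  obtain ⟨X₀', X₁', x, g, z, h0, h1, hT⟩ := hX.exists_triangle (Z⟦(1 : ℤ)⟧)
  have hinv := inv_rot_of_distTriang _ hT
  set ι := (shiftEquiv C (1 : ℤ)).unitIso.app Z with hι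
  refine ⟨X₀', X₁', ι.hom ≫ (Triangle.invRotate (Triangle.mk x g z)).mor₁, x,
    (Triangle.invRotate (Triangle.mk x g z)).mor₃ ≫ (ι.inv)⟦(1 : ℤ)⟧', h0, h1,
    isomorphic_distinguished _ hinv _ ?_⟩
  exact Triangle.isoMk _ _ ι (Iso.refl _) (Iso.refl _) (Category.comp_id _)
    ((Category.comp_id _).trans (Category.id_comp _).symm)
    (by
      erw [Category.id_comp]
      change ((Triangle.mk x g z).invRotate.mor₃ ≫ (ι.inv)⟦(1 : ℤ)⟧') ≫ (ι.hom)⟦(1 : ℤ)⟧' = _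
      erw [Category.assoc, ← Functor.map_comp, Iso.inv_hom_id, CategoryTheory.Functor.map_id,
        Category.comp_id])

/-- Description of the first morphism of the inverse rotation. -/
lemma invRotate_mor₁_eq {A₀ A₁ A₂ : C} (f₀ : A₀ ⟶ A₁) (f₁ : A₁ ⟶ A₂) (f₂ : A₂ ⟶ A₀⟦(1 : ℤ)⟧) :
    (Triangle.invRotate (Triangle.mk f₀ f₁ f₂)).mor₁ =
      -(f₂⟦(-1 : ℤ)⟧' ≫ (shiftFunctorCompIsoId C (1 : ℤ) (-1 : ℤ) (add_neg_cancel 1)).hom.app A₀) := by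
  dsimp [Triangle.invRotate]
  rfl

/-- The hom relation associated to a cluster-tilting subcategory is a congruence. -/
lemma IsClusterTilting.congruence (X : C → Prop) (hX : IsClusterTilting X) :
    Congruence (homRelOf X) := by
  refine @Congruence.mk _ _ _ ⟨?_⟩ ⟨?_⟩ ?_
  rotate_right
  · intro a b
    constructor
    · intro f
      obtain ⟨Z₀, hZ₀⟩ := HasZeroObject.zero (C := C)
      exact ⟨Z₀, 0, 0, hX.zero Z₀ hZ₀, by simp⟩
    · rintro f g ⟨X', u, v, hX', huv⟩
      exact ⟨X', -u, v, hX', by rw [neg_comp, huv, neg_sub]⟩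
    · rintro f g h ⟨X₁, u₁, v₁, h₁, e₁⟩ ⟨X₂, u₂, v₂, h₂, e₂⟩
      set b := BinaryBiproduct.bicone X₁ X₂
      refine ⟨b.pt, u₁ ≫ b.inl + u₂ ≫ b.inr, b.fst ≫ v₁ + b.snd ≫ v₂,
        hX.biprod b ⟨BinaryBiproduct.isBilimit X₁ X₂⟩ h₁ h₂, ?_⟩
      have : (u₁ ≫ b.inl + u₂ ≫ b.inr) ≫ (b.fst ≫ v₁ + b.snd ≫ v₂)
          = u₁ ≫ v₁ + u₂ ≫ v₂ := by
        simp [add_comp, comp_add]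
      rw [this, e₁, e₂, sub_add_sub_cancel]
  · rintro a b c f g g' ⟨X', u, v, hX', huv⟩
    exact ⟨X', f ≫ u, v, hX', by rw [Category.assoc, huv, comp_sub]⟩
  · rintro a b c f f' g ⟨X', u, v, hX', huv⟩
    exact ⟨X', u, v ≫ g, hX', by rw [← Category.assoc, huv, sub_comp]⟩

/-- For a distinguished triangle `A₀ ⟶ A₁ ⟶ A₂ ⟶ ΣA₀` over a cluster-tilting
subcategory `X`, if both `f₂` and `Σ⁻¹f₂` factor through `X`, then
`0 ⟶ A₀ ⟶ A₁ ⟶ A₂ ⟶ 0` is a short exact sequence in `C/X`: `f̄₀` is a monomorphism, `f̄₁` is an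
epimorphism, `f̄₀` is a kernel of `f̄₁` and `f̄₁` is a cokernel of `f̄₀`. -/
theorem short_exact_of_factorsThru [IsIdempotentComplete C]
    (X : C → Prop) (hX : IsClusterTilting X)
    {A₀ A₁ A₂ : C} (f₀ : A₀ ⟶ A₁) (f₁ : A₁ ⟶ A₂) (f₂ : A₂ ⟶ A₀⟦(1 : ℤ)⟧)
    (hT : Triangle.mk f₀ f₁ f₂ ∈ distTriang C)
    (hf₂ : FactorsThru X f₂)
    (hf₂' : FactorsThru X
      (f₂⟦(-1 : ℤ)⟧' ≫ (shiftFunctorCompIsoId C (1 : ℤ) (-1 : ℤ) (by omega)).hom.app A₀)) :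
    Mono ((quotFunctor X).map f₀) ∧ Epi ((quotFunctor X).map f₁) ∧
    ((quotFunctor X).map f₀ ≫ (quotFunctor X).map f₁ = (quotFunctor X).map (0 : A₀ ⟶ A₂)) ∧
    (∀ (Z : C) (φ : (quotFunctor X).obj Z ⟶ (quotFunctor X).obj A₁),
      φ ≫ (quotFunctor X).map f₁ = (quotFunctor X).map (0 : Z ⟶ A₂) →
      ∃! ψ : (quotFunctor X).obj Z ⟶ (quotFunctor X).obj A₀,
        ψ ≫ (quotFunctor X).map f₀ = φ) ∧
    (∀ (Z : C) (φ : (quotFunctor X).obj A₁ ⟶ (quotFunctor X).obj Z),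
      (quotFunctor X).map f₀ ≫ φ = (quotFunctor X).map (0 : A₀ ⟶ Z) →
      ∃! ψ : (quotFunctor X).obj A₂ ⟶ (quotFunctor X).obj Z,
        (quotFunctor X).map f₁ ≫ ψ = φ) := by
  haveI : Congruence (homRelOf X) := hX.congruence X
  -- every morphism from an object of `X` to `A₂` lifts through `f₁`
  have XepicLift : ∀ {X' : C}, X X' → ∀ v : X' ⟶ A₂, ∃ w : X' ⟶ A₁, w ≫ f₁ = v := by
    intro X' hX' v
    obtain ⟨X₃, p, q, hX₃, hpq⟩ := hf₂'
    have key : (v ≫ f₂)⟦(-1 : ℤ)⟧' = 0 := by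
      rw [Functor.map_comp]
      have hf : f₂⟦(-1 : ℤ)⟧' = (p ≫ q) ≫
          (shiftFunctorCompIsoId C (1 : ℤ) (-1 : ℤ) (by omega)).inv.app A₀ := by
        rw [hpq]; simp
      rw [hf]
      simp only [← Category.assoc]
      rw [hX.negShift_hom_zero X hX' hX₃ (v⟦(-1 : ℤ)⟧' ≫ p)]
      simp
    have h2 := shift_neg_shift' (v ≫ f₂) (1 : ℤ)
    rw [key, Functor.map_zero] at h2
    have h0 : v ≫ f₂ = 0 := by
      have h5 : v ≫ f₂ ≫ (shiftFunctorCompIsoId C (-1 : ℤ) (1 : ℤ)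
          (neg_add_cancel (1 : ℤ))).inv.app (A₀⟦(1 : ℤ)⟧) = 0 := by simpa using h2.symm
      rwa [← Category.assoc, IsIso.comp_right_eq_zero] at h5
    obtain ⟨w, hw⟩ := Triangle.coyoneda_exact₃ _ hT v h0
    exact ⟨w, hw.symm⟩
  -- `f₀` is `X`-monic
  have XmonicExt : ∀ {X' : C}, X X' → ∀ u : A₀ ⟶ X', ∃ w : A₁ ⟶ X', f₀ ≫ w = u := by
    intro X' hX' u
    obtain ⟨X₂', α, β, hX₂', hαβ⟩ := hf₂
    have hc : (Triangle.invRotate (Triangle.mk f₀ f₁ f₂)).mor₁ ≫ u = 0 := by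
      erw [invRotate_mor₁_eq, ← hαβ, Functor.map_comp, neg_comp, neg_eq_zero]
      simp only [Category.assoc]
      erw [Category.assoc, Category.assoc]
      erw [hX.negShift_hom_zero X hX₂' hX'
          (β⟦(-1 : ℤ)⟧' ≫ (shiftFunctorCompIsoId C (1 : ℤ) (-1 : ℤ) (by omega)).hom.app A₀ ≫ u),
        comp_zero]
    obtain ⟨w, hw⟩ := Triangle.yoneda_exact₂ _ (inv_rot_of_distTriang _ hT) u hc
    exact ⟨w, hw.symm⟩
  -- if `h ≫ f₀` factors through `X`, so does `h`
  have monoLemma : ∀ {Z : C} (h : Z ⟶ A₀), FactorsThru X (h ≫ f₀) → FactorsThru X h := by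
    rintro Z h ⟨X', u, v, hX', huv⟩
    obtain ⟨X₀', X₁', ε, c, σ, h0, h1, hTr⟩ := hX.exists_approx_triangle X Z
    have hTi := inv_rot_of_distTriang _ hTr
    have hm : (Triangle.invRotate (Triangle.mk ε c σ)).mor₁ ≫ h ≫ f₀ = 0 := by
      erw [← huv, ← Category.assoc, hX.negShift_hom_zero X h1 hX'
        ((Triangle.invRotate (Triangle.mk ε c σ)).mor₁ ≫ u), zero_comp]
    obtain ⟨g, hg⟩ := Triangle.coyoneda_exact₂ _ (inv_rot_of_distTriang _ hT)
      ((Triangle.invRotate (Triangle.mk ε c σ)).mor₁ ≫ h) (by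
        dsimp only [Triangle.invRotate]
        erw [Category.assoc]; exact hm)
    obtain ⟨X₃, p, q, hX₃, hpq⟩ := hf₂'
    have hg0 : (Triangle.invRotate (Triangle.mk ε c σ)).mor₁ ≫ h = 0 := by
      erw [hg, invRotate_mor₁_eq, ← hpq, comp_neg, neg_eq_zero, ← Category.assoc,
        hX.negShift_hom_zero X h1 hX₃ (g ≫ p), zero_comp]
      rfl
    obtain ⟨w, hw⟩ := Triangle.yoneda_exact₂ _ hTi h hg0
    exact ⟨X₀', ε, w, h0, hw.symm⟩
  -- if `f₁ ≫ h` factors through `X`, so does `h`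
  have epiLemma : ∀ {Z : C} (h : A₂ ⟶ Z), FactorsThru X (f₁ ≫ h) → FactorsThru X h := by
    rintro Z h ⟨X', u, v, hX', huv⟩
    obtain ⟨X₀, X₁, x, g, z, h0, h1, hTz⟩ := hX.exists_triangle Z
    have h2 : f₁ ≫ h ≫ z = 0 := by
      rw [← Category.assoc, ← huv, Category.assoc, hX.hom_shift_zero hX' h0 (v ≫ z), comp_zero]
    obtain ⟨e, he⟩ := Triangle.yoneda_exact₂ _ (rot_of_distTriang _ hT) (h ≫ z) h2
    obtain ⟨X₂', α, β, hX₂', hαβ⟩ := hf₂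
    have he' : h ≫ z = f₂ ≫ e := by simp at he; exact he
    have hz0 : h ≫ z = 0 := by
      erw [he', ← hαβ, Category.assoc, hX.hom_shift_zero hX₂' h0 (β ≫ e), comp_zero]
    obtain ⟨w, hw⟩ := Triangle.coyoneda_exact₃ _ hTz h hz0
    exact ⟨X₁, w, g, h1, hw.symm⟩
  -- monomorphism
  have hMono : Mono ((quotFunctor X).map f₀) := by
    constructor
    intro W a b hab
    obtain ⟨W⟩ := W
    obtain ⟨a', rfl⟩ := (quotFunctor X).map_surjective a
    obtain ⟨b', rfl⟩ := (quotFunctor X).map_surjective b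
    rw [← Functor.map_comp, ← Functor.map_comp] at hab
    have hrel := (Quotient.functor_map_eq_iff (homRelOf X) _ _).1 hab
    have : FactorsThru X ((a' - b') ≫ f₀) := by rw [sub_comp]; exact hrel
    exact CategoryTheory.Quotient.sound _ (monoLemma _ this)
  -- epimorphism
  have hEpi : Epi ((quotFunctor X).map f₁) := by
    constructor
    intro W a b hab
    obtain ⟨W⟩ := W
    obtain ⟨a', rfl⟩ := (quotFunctor X).map_surjective a
    obtain ⟨b', rfl⟩ := (quotFunctor X).map_surjective b
    rw [← Functor.map_comp, ← Functor.map_comp] at hab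
    have hrel := (Quotient.functor_map_eq_iff (homRelOf X) _ _).1 hab
    have : FactorsThru X (f₁ ≫ (a' - b')) := by rw [comp_sub]; exact hrel
    exact CategoryTheory.Quotient.sound _ (epiLemma _ this)
  refine ⟨hMono, hEpi, ?_, ?_, ?_⟩
  · rw [← Functor.map_comp]
    congr 1
    exact comp_distTriang_mor_zero₁₂ _ hT
  · -- kernel
    intro Z φ hφ
    obtain ⟨g, rfl⟩ := (quotFunctor X).map_surjective φ
    rw [← Functor.map_comp] at hφ
    have hrel := (Quotient.functor_map_eq_iff (homRelOf X) _ _).1 hφ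
    rw [homRelOf, sub_zero] at hrel
    obtain ⟨X', u, v, hX', huv⟩ := hrel
    obtain ⟨w, hw⟩ := XepicLift hX' v
    have hk : (g - u ≫ w) ≫ f₁ = 0 := by
      rw [sub_comp, Category.assoc, hw, huv, sub_self]
    obtain ⟨ψ₀, hψ₀⟩ := Triangle.coyoneda_exact₂ _ hT (g - u ≫ w) hk
    refine ⟨(quotFunctor X).map ψ₀, ?_, ?_⟩
    · show (quotFunctor X).map ψ₀ ≫ (quotFunctor X).map f₀ = (quotFunctor X).map g
      erw [← Functor.map_comp]
      apply CategoryTheory.Quotient.sound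
      refine ⟨X', -u, w, hX', ?_⟩
      rw [neg_comp]
      have : ψ₀ ≫ f₀ = g - u ≫ w := hψ₀.symm
      rw [this]
      abel
    · intro y hy
      have : y ≫ (quotFunctor X).map f₀ = (quotFunctor X).map ψ₀ ≫ (quotFunctor X).map f₀ := by
        erw [hy, ← Functor.map_comp]
        apply CategoryTheory.Quotient.sound
        refine ⟨X', u, w, hX', ?_⟩
        have : ψ₀ ≫ f₀ = g - u ≫ w := hψ₀.symm
        rw [this]
        abel
      exact (cancel_mono _).1 this
  · -- cokernel
    intro Z φ hφ
    obtain ⟨g, rfl⟩ := (quotFunctor X).map_surjective φ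
    rw [← Functor.map_comp] at hφ
    have hrel := (Quotient.functor_map_eq_iff (homRelOf X) _ _).1 hφ
    rw [homRelOf, sub_zero] at hrel
    obtain ⟨X', u, v, hX', huv⟩ := hrel
    obtain ⟨w, hw⟩ := XmonicExt hX' u
    have hk : f₀ ≫ (g - w ≫ v) = 0 := by
      rw [comp_sub, ← Category.assoc, hw, huv, sub_self]
    obtain ⟨ψ₀, hψ₀⟩ := Triangle.yoneda_exact₂ _ hT (g - w ≫ v) hk
    refine ⟨(quotFunctor X).map ψ₀, ?_, ?_⟩
    · show (quotFunctor X).map f₁ ≫ (quotFunctor X).map ψ₀ = (quotFunctor X).map g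
      erw [← Functor.map_comp]
      apply CategoryTheory.Quotient.sound
      refine ⟨X', -w, v, hX', ?_⟩
      rw [neg_comp]
      have : f₁ ≫ ψ₀ = g - w ≫ v := hψ₀.symm
      rw [this]
      abel
    · intro y hy
      have : (quotFunctor X).map f₁ ≫ y = (quotFunctor X).map f₁ ≫ (quotFunctor X).map ψ₀ := by
        erw [hy, ← Functor.map_comp]
        apply CategoryTheory.Quotient.sound
        refine ⟨X', w, v, hX', ?_⟩
        have : f₁ ≫ ψ₀ = g - w ≫ v := hψ₀.symm
        rw [this]
        abel
      exact (cancel_epi _).1 this.symm |>.symm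
end

section
/- Let X be a cluster-tilting subcategory of a triangulated category C with split idempotents, and let A₀ →f₀ A₁ →f₁ A₂ →f₂ ΣA₀ be a distinguished triangle in C. If f̄₁ is an epimorphism in the quotient category C/X, then f₀ is X-monic, i.e. every morphism from A₀ to an object of X factors through f₀. -/
open CategoryTheory CategoryTheory.Limits CategoryTheory.Pretriangulated

universe v u

variable {C : Type u} [Category.{v} C] [Preadditive C] [HasZeroObject C]
  [HasShift C ℤ] [∀ n : ℤ, (shiftFunctor C n).Additive] [Pretriangulated C]

lemma homRelOf_congruence (X : C → Prop) (hX : IsAdditiveClosed X) :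
    CategoryTheory.Congruence (homRelOf X) where
  equivalence := by
    intro A B
    constructor
    · intro f
      obtain ⟨Z, hZ⟩ := Limits.HasZeroObject.zero (C := C)
      exact ⟨Z, 0, 0, hX.zero _ hZ, by simp⟩
    · rintro f g ⟨Y, a, b, hY, hab⟩
      exact ⟨Y, -a, b, hY, by rw [Preadditive.neg_comp, hab, neg_sub]⟩
    · rintro f g h ⟨Y, a, b, hY, hab⟩ ⟨Z, c, d, hZ, hcd⟩
      refine ⟨Y ⊞ Z, biprod.lift a c, biprod.desc b d,
        hX.biprod (BinaryBiproduct.bicone Y Z) ⟨BinaryBiproduct.isBilimit Y Z⟩ hY hZ, ?_⟩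
      rw [biprod.lift_desc, hab, hcd]
      abel
  comp_left := by
    rintro W A B f g g' ⟨Y, a, b, hY, hab⟩
    exact ⟨Y, f ≫ a, b, hY, by rw [Category.assoc, hab, Preadditive.comp_sub]⟩
  comp_right := by
    rintro W A B f f' g ⟨Y, a, b, hY, hab⟩
    exact ⟨Y, a, b ≫ g, hY, by rw [← Category.assoc, hab, Preadditive.sub_comp]⟩

/-- For a distinguished triangle `A₀ ⟶ A₁ ⟶ A₂ ⟶ ΣA₀` over a cluster-tilting
subcategory `X`, if `f̄₁` is an epimorphism in `C/X` then `f₀` is `X`-monic. -/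
theorem xmonic_of_epi [IsIdempotentComplete C]
    (X : C → Prop) (hX : IsClusterTilting X)
    {A₀ A₁ A₂ : C} (f₀ : A₀ ⟶ A₁) (f₁ : A₁ ⟶ A₂) (f₂ : A₂ ⟶ A₀⟦(1 : ℤ)⟧)
    (hT : Triangle.mk f₀ f₁ f₂ ∈ distTriang C)
    (hepi : Epi ((quotFunctor X).map f₁)) :
    XMonic X f₀ := by
  intro X' hX' u
  haveI hcong : CategoryTheory.Congruence (homRelOf X) := homRelOf_congruence X hX.toIsAdditiveClosed
  -- Step 1: `f₂ ≫ u⟦1⟧' = 0`.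
  have hz : f₂ ≫ u⟦(1 : ℤ)⟧' = 0 := by
    have h1 : f₁ ≫ (f₂ ≫ u⟦(1 : ℤ)⟧') = 0 := by
      have h0 : f₁ ≫ f₂ = 0 := comp_distTriang_mor_zero₂₃ _ hT
      rw [← Category.assoc, h0, zero_comp]
    have h2 : (quotFunctor X).map (f₂ ≫ u⟦(1 : ℤ)⟧') = (quotFunctor X).map 0 := by
      rw [← cancel_epi ((quotFunctor X).map f₁), ← Functor.map_comp, ← Functor.map_comp,
        h1, comp_zero]
    rw [Quotient.functor_map_eq_iff] at h2
    obtain ⟨X'', a, b, hX'', hab⟩ := h2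
    have hb : b = 0 := hX.hom_shift_zero hX'' hX' b
    rw [hb, comp_zero] at hab
    rw [← sub_zero (f₂ ≫ u⟦(1 : ℤ)⟧'), ← hab]
  -- Step 2: use the long exact sequence (yoneda exactness of the inverse rotation).
  have hzero : ((Triangle.mk f₀ f₁ f₂).invRotate).mor₁ ≫ u = 0 := by
    show (-f₂⟦(-1 : ℤ)⟧' ≫ (shiftEquiv C (1 : ℤ)).unitIso.inv.app A₀) ≫ u = 0
    have hnat := (shiftEquiv C (1 : ℤ)).unitIso.inv.naturality u
    dsimp at hnat
    rw [Preadditive.neg_comp]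
    erw [Category.assoc]
    dsimp
    erw [← hnat, ← Category.assoc, ← Functor.map_comp, hz, Functor.map_zero, zero_comp, neg_zero]
  obtain ⟨v, hv⟩ := Triangle.yoneda_exact₂ _ (inv_rot_of_distTriang _ hT) u hzero
  exact ⟨v, hv.symm⟩
end

section
/- Let X be a cluster-tilting subcategory of a triangulated category C with split idempotents. Then every morphism of the quotient category C/X admits both a kernel and a cokernel in C/X. -/
open CategoryTheory CategoryTheory.Limits CategoryTheory.Pretriangulated

universe v u

variable {C : Type u} [Category.{v} C] [Preadditive C] [HasZeroObject C]
  [HasShift C ℤ] [∀ n : ℤ, (shiftFunctor C n).Additive] [Pretriangulated C]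

/-! ### Auxiliary lemmas -/

section Aux

variable {X : C → Prop}

section TriangleWrappers

variable {A B Cf : C} {m : A ⟶ B} {g' : B ⟶ Cf} {h : Cf ⟶ A⟦(1 : ℤ)⟧}

lemma tri_zero₁₂ (hT : Triangle.mk m g' h ∈ distTriang C) : m ≫ g' = 0 :=
  comp_distTriang_mor_zero₁₂ _ hT

lemma tri_zero₂₃ (hT : Triangle.mk m g' h ∈ distTriang C) : g' ≫ h = 0 :=
  comp_distTriang_mor_zero₂₃ _ hT

lemma tri_zero₃₁ (hT : Triangle.mk m g' h ∈ distTriang C) : h ≫ m⟦(1 : ℤ)⟧' = 0 :=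
  comp_distTriang_mor_zero₃₁ _ hT

lemma tri_yoneda₂ (hT : Triangle.mk m g' h ∈ distTriang C) {Y : C} (p : B ⟶ Y)
    (hp : m ≫ p = 0) : ∃ S : Cf ⟶ Y, p = g' ≫ S :=
  Triangle.yoneda_exact₂ _ hT p hp

lemma tri_yoneda₃ (hT : Triangle.mk m g' h ∈ distTriang C) {Y : C} (p : Cf ⟶ Y)
    (hp : g' ≫ p = 0) : ∃ w : A⟦(1 : ℤ)⟧ ⟶ Y, p = h ≫ w :=
  Triangle.yoneda_exact₃ _ hT p hp

lemma tri_coyoneda₂ (hT : Triangle.mk m g' h ∈ distTriang C) {Y : C} (p : Y ⟶ B)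
    (hp : p ≫ g' = 0) : ∃ S : Y ⟶ A, p = S ≫ m :=
  Triangle.coyoneda_exact₂ _ hT p hp

lemma tri_coyoneda₃ (hT : Triangle.mk m g' h ∈ distTriang C) {Y : C} (p : Y ⟶ Cf)
    (hp : p ≫ h = 0) : ∃ S : Y ⟶ B, p = S ≫ g' :=
  Triangle.coyoneda_exact₃ _ hT p hp

lemma tri_coyoneda₁ (hT : Triangle.mk m g' h ∈ distTriang C) {Y : C}
    (p : Y ⟶ A⟦(1 : ℤ)⟧) (hp : p ≫ m⟦(1 : ℤ)⟧' = 0) : ∃ w : Y ⟶ Cf, p = w ≫ h :=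
  Triangle.coyoneda_exact₁ _ hT p hp

end TriangleWrappers

lemma IsAdditiveClosed.mem_biprod (hX : IsAdditiveClosed X) {A B : C} (hA : X A) (hB : X B) :
    X (A ⊞ B) :=
  hX.biprod (BinaryBiproduct.bicone A B) ⟨BinaryBiproduct.isBilimit A B⟩ hA hB

lemma factorsThru_zero (hX : IsAdditiveClosed X) (A B : C) : FactorsThru X (0 : A ⟶ B) := by
  obtain ⟨Z, hZ⟩ := HasZeroObject.zero (C := C)
  exact ⟨Z, 0, 0, hX.zero Z hZ, by simp⟩

lemma FactorsThru.neg {A B : C} {f : A ⟶ B} (h : FactorsThru X f) : FactorsThru X (-f) := by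
  obtain ⟨X₀, a, b, hX₀, hab⟩ := h
  exact ⟨X₀, -a, b, hX₀, by simp [hab]⟩

lemma factorsThru_add (hX : IsAdditiveClosed X) {A B : C} {f g : A ⟶ B}
    (hf : FactorsThru X f) (hg : FactorsThru X g) : FactorsThru X (f + g) := by
  obtain ⟨X₀, a, b, hX₀, hab⟩ := hf
  obtain ⟨X₁, a', b', hX₁, hab'⟩ := hg
  exact ⟨X₀ ⊞ X₁, biprod.lift a a', biprod.desc b b', hX.mem_biprod hX₀ hX₁, by
    simp [biprod.lift_desc, hab, hab']⟩

lemma quot_eq_iff (hX : IsAdditiveClosed X) {A B : C} (f g : A ⟶ B) :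
    (quotFunctor X).map f = (quotFunctor X).map g ↔ FactorsThru X (f - g) := by
  haveI := congruence_homRelOf hX
  exact Quotient.functor_map_eq_iff (homRelOf X) f g

lemma quot_eq_zero_iff (hX : IsAdditiveClosed X) {A B : C} (f : A ⟶ B) :
    (quotFunctor X).map f = (quotFunctor X).map (0 : A ⟶ B) ↔ FactorsThru X f := by
  rw [quot_eq_iff hX, sub_zero]

/-- Every object `A` admits a left `X`-approximation `α : A ⟶ W₀` which fits (after shifting)
into a distinguished triangle `W₀ ⟶ W₁ ⟶ A⟦1⟧ ⟶ W₀⟦1⟧` with `W₀, W₁ ∈ X`. -/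
lemma exists_approx_triangle (hX : IsClusterTilting X) (A : C) :
    ∃ (W₀ W₁ : C) (a : W₀ ⟶ W₁) (b : W₁ ⟶ A⟦(1 : ℤ)⟧) (α : A ⟶ W₀),
      X W₀ ∧ X W₁ ∧ Triangle.mk a b (α⟦(1 : ℤ)⟧') ∈ distTriang C := by
  obtain ⟨W₀, W₁, a, b, c, h₀, h₁, hT⟩ := hX.exists_triangle (A⟦(1 : ℤ)⟧)
  refine ⟨W₀, W₁, a, b, (shiftFunctor C (1 : ℤ)).preimage c, h₀, h₁, ?_⟩
  simpa only [Functor.map_preimage] using hT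

/-- The map `α` from `exists_approx_triangle` is a left `X`-approximation. -/
lemma leftApprox_property (hX : IsClusterTilting X) {A W₀ W₁ : C} {a : W₀ ⟶ W₁}
    {b : W₁ ⟶ A⟦(1 : ℤ)⟧} {α : A ⟶ W₀} (h₁ : X W₁)
    (hT : Triangle.mk a b (α⟦(1 : ℤ)⟧') ∈ distTriang C)
    {X'' : C} (hX'' : X X'') (u : A ⟶ X'') : ∃ v : W₀ ⟶ X'', α ≫ v = u := by
  obtain ⟨g, hg⟩ := tri_yoneda₃ hT (u⟦(1 : ℤ)⟧') (hX.hom_shift_zero h₁ hX'' _)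
  refine ⟨(shiftFunctor C (1 : ℤ)).preimage g, (shiftFunctor C (1 : ℤ)).map_injective ?_⟩
  rw [Functor.map_comp, Functor.map_preimage, ← hg]

/-- Every object `B` admits a right `X`-approximation `β : B₁ ⟶ B` with `B₁ ∈ X`. -/
lemma exists_rightApprox (hX : IsClusterTilting X) (B : C) :
    ∃ (B₁ : C) (β : B₁ ⟶ B), X B₁ ∧ ∀ (X' : C), X X' → ∀ u : X' ⟶ B, ∃ v, v ≫ β = u := by
  obtain ⟨B₀, B₁, a, β, c, h₀, h₁, hT⟩ := hX.exists_triangle B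
  refine ⟨B₁, β, h₁, fun X' hX' u => ?_⟩
  obtain ⟨v, hv⟩ := tri_coyoneda₃ hT u (hX.hom_shift_zero hX' h₀ _)
  exact ⟨v, hv.symm⟩

/-- Key lemma for the cokernel: if `d` kills (mod `X`) the composite `B ⟶ B ⊞ W₀ ⟶ Cf`,
then `d` itself factors through `X`. -/
lemma coker_epi (hX : IsClusterTilting X) {A B W₀ W₁ Cf : C}
    {a : W₀ ⟶ W₁} {bb : W₁ ⟶ A⟦(1 : ℤ)⟧} {α : A ⟶ W₀} (hW₀ : X W₀) (hW₁ : X W₁)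
    (hTα : Triangle.mk a bb (α⟦(1 : ℤ)⟧') ∈ distTriang C)
    {f : A ⟶ B} {g' : B ⊞ W₀ ⟶ Cf} {h : Cf ⟶ A⟦(1 : ℤ)⟧}
    (hT : Triangle.mk (biprod.lift f α) g' h ∈ distTriang C)
    {Z : C} (d : Cf ⟶ Z) (hd : FactorsThru X (biprod.inl ≫ g' ≫ d)) :
    FactorsThru X d := by
  obtain ⟨X'', p, q₁, hX'', hpq⟩ := hd
  set P : B ⊞ W₀ ⟶ X'' ⊞ W₀ := biprod.lift (biprod.fst ≫ p) biprod.snd with hP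
  set Q : X'' ⊞ W₀ ⟶ Z := biprod.desc q₁ (biprod.inr ≫ g' ≫ d) with hQ
  have hPQ : P ≫ Q = g' ≫ d := by
    apply biprod.hom_ext'
    · simp [hP, hQ, hpq]
    · simp [hP, hQ]
  obtain ⟨r', hr'⟩ := leftApprox_property hX hW₁ hTα (hX.mem_biprod hX'' hW₀)
    (biprod.lift f α ≫ P)
  have hmP' : biprod.lift f α ≫ (P - biprod.snd ≫ r') = 0 := by
    rw [Preadditive.comp_sub, ← Category.assoc, biprod.lift_snd, hr', sub_self]
  obtain ⟨S, hS⟩ := tri_yoneda₂ hT (P - biprod.snd ≫ r') hmP'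
  set e := d - S ≫ Q with he_def
  have he : g' ≫ e = biprod.snd ≫ r' ≫ Q := by
    have h6 : g' ≫ S ≫ Q = P ≫ Q - (biprod.snd ≫ r') ≫ Q := by
      rw [← Category.assoc, ← hS, Preadditive.sub_comp]
    rw [he_def, Preadditive.comp_sub, h6, hPQ]
    simp
  obtain ⟨Z₀, Z₁, γ₁, γ, δ, hZ₀, hZ₁, hZT⟩ := hX.exists_triangle Z
  have h2 : g' ≫ (e ≫ δ) = 0 := by
    rw [← Category.assoc, he, Category.assoc, Category.assoc,
      hX.hom_shift_zero hW₀ hZ₀ (r' ≫ Q ≫ δ)]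
    simp
  obtain ⟨w, hw⟩ := tri_yoneda₃ hT (e ≫ δ) h2
  obtain ⟨w₁, hw₁⟩ := leftApprox_property hX hW₁ hTα hZ₀ ((shiftFunctor C (1 : ℤ)).preimage w)
  have hwfac : w = α⟦(1 : ℤ)⟧' ≫ w₁⟦(1 : ℤ)⟧' := by
    rw [← Functor.map_comp, hw₁, Functor.map_preimage]
  have hhα : h ≫ α⟦(1 : ℤ)⟧' = 0 := by
    have h3 : h ≫ (biprod.lift f α)⟦(1 : ℤ)⟧' = 0 := tri_zero₃₁ hT
    have h4 : α = biprod.lift f α ≫ biprod.snd := by simp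
    rw [h4, Functor.map_comp, ← Category.assoc, h3, zero_comp]
  have heδ : e ≫ δ = 0 := by
    rw [hw, hwfac, ← Category.assoc, hhα, zero_comp]
  obtain ⟨et, het⟩ := tri_coyoneda₃ hZT e heδ
  have hfe : FactorsThru X e := ⟨Z₁, et, γ, hZ₁, het.symm⟩
  have hd' : d = e + S ≫ Q := by rw [he_def]; abel
  rw [hd']
  exact factorsThru_add hX.toIsAdditiveClosed hfe
    ⟨X'' ⊞ W₀, S, Q, hX.mem_biprod hX'' hW₀, rfl⟩

/-- Key lemma for the kernel: if `v` composed with `K ⟶ A ⊞ B₁ ⟶ A` factors through `X`,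
then `v` itself factors through `X`. -/
lemma ker_mono (hX : IsClusterTilting X) {A B B₁ K : C}
    {β : B₁ ⟶ B} (hB₁ : X B₁)
    (hβ : ∀ (X' : C), X X' → ∀ u : X' ⟶ B, ∃ v, v ≫ β = u)
    {f : A ⟶ B} {d : K ⟶ A ⊞ B₁} {h : B ⟶ K⟦(1 : ℤ)⟧}
    (hT : Triangle.mk d (biprod.desc f β) h ∈ distTriang C)
    {Z : C} (v : Z ⟶ K) (hv : FactorsThru X (v ≫ d ≫ biprod.fst)) :
    FactorsThru X v := by
  obtain ⟨X'', p, q₁, hX'', hpq⟩ := hv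
  set P : Z ⟶ X'' ⊞ B₁ := biprod.lift p (v ≫ d ≫ biprod.snd) with hP
  set Q : X'' ⊞ B₁ ⟶ A ⊞ B₁ := biprod.desc (q₁ ≫ biprod.inl) biprod.inr with hQ
  have hPQ : P ≫ Q = v ≫ d := by
    rw [hP, hQ, biprod.lift_desc]
    apply biprod.hom_ext
    · simp [hpq]
    · simp
  obtain ⟨Q', hQ'⟩ := hβ _ (hX.mem_biprod hX'' hB₁) (Q ≫ biprod.desc f β)
  have hQ₂ : (Q - Q' ≫ biprod.inr) ≫ biprod.desc f β = 0 := by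
    rw [Preadditive.sub_comp, Category.assoc, biprod.inr_desc, hQ', sub_self]
  obtain ⟨S, hS⟩ := tri_coyoneda₂ hT (Q - Q' ≫ biprod.inr) hQ₂
  set e := v - P ≫ S with he_def
  have he : e ≫ d = (P ≫ Q') ≫ biprod.inr := by
    have h6 : P ≫ S ≫ d = P ≫ Q - P ≫ Q' ≫ biprod.inr := by
      rw [← hS, Preadditive.comp_sub]
    rw [he_def, Preadditive.sub_comp, Category.assoc, h6, hPQ]
    simp
  obtain ⟨W₀, W₁, a₂, b₂, α, hW₀, hW₁, hTα⟩ := exists_approx_triangle hX Z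
  have h1 : (b₂ ≫ e⟦(1 : ℤ)⟧') ≫ d⟦(1 : ℤ)⟧' = 0 := by
    rw [Category.assoc, ← Functor.map_comp, he, Functor.map_comp, ← Category.assoc,
      hX.hom_shift_zero hW₁ hB₁ (b₂ ≫ (P ≫ Q')⟦(1 : ℤ)⟧'), zero_comp]
  obtain ⟨w, hw⟩ := tri_coyoneda₁ hT (b₂ ≫ e⟦(1 : ℤ)⟧') h1
  obtain ⟨w', hw'⟩ := hβ _ hW₁ w
  have hβh : β ≫ h = 0 := by
    have h5 : biprod.desc f β ≫ h = 0 := tri_zero₂₃ hT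
    have h7 : β = biprod.inr ≫ biprod.desc f β := by simp
    rw [h7, Category.assoc, h5, comp_zero]
  have h2 : b₂ ≫ e⟦(1 : ℤ)⟧' = 0 := by
    rw [hw, ← hw', Category.assoc, hβh, comp_zero]
  obtain ⟨g, hg⟩ := tri_yoneda₃ hTα (e⟦(1 : ℤ)⟧') h2
  have he' : e = α ≫ (shiftFunctor C (1 : ℤ)).preimage g := by
    apply (shiftFunctor C (1 : ℤ)).map_injective
    rw [Functor.map_comp, Functor.map_preimage, hg]
  have hfe : FactorsThru X e := ⟨W₀, α, _, hW₀, he'.symm⟩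
  have hv' : v = e + P ≫ S := by rw [he_def]; abel
  rw [hv']
  exact factorsThru_add hX.toIsAdditiveClosed hfe
    ⟨X'' ⊞ B₁, P, S, hX.mem_biprod hX'' hB₁, rfl⟩

end Aux

/-- Every morphism of the quotient category `C/X` by a cluster-tilting
subcategory `X` admits both a kernel and a cokernel in `C/X`. -/
theorem has_kernel_and_cokernel [IsIdempotentComplete C]
    (X : C → Prop) (hX : IsClusterTilting X)
    (A B : C) (φ : (quotFunctor X).obj A ⟶ (quotFunctor X).obj B) :
    (∃ (K : C) (k : (quotFunctor X).obj K ⟶ (quotFunctor X).obj A),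
      k ≫ φ = (quotFunctor X).map (0 : K ⟶ B) ∧
      ∀ (Z : C) (u : (quotFunctor X).obj Z ⟶ (quotFunctor X).obj A),
        u ≫ φ = (quotFunctor X).map (0 : Z ⟶ B) →
        ∃! v : (quotFunctor X).obj Z ⟶ (quotFunctor X).obj K, v ≫ k = u) ∧
    (∃ (Q : C) (q : (quotFunctor X).obj B ⟶ (quotFunctor X).obj Q),
      φ ≫ q = (quotFunctor X).map (0 : A ⟶ Q) ∧
      ∀ (Z : C) (u : (quotFunctor X).obj B ⟶ (quotFunctor X).obj Z),
        φ ≫ u = (quotFunctor X).map (0 : A ⟶ Z) →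
        ∃! v : (quotFunctor X).obj Q ⟶ (quotFunctor X).obj Z, q ≫ v = u) := by
  have hXa := hX.toIsAdditiveClosed
  obtain ⟨f, rfl⟩ := (quotFunctor X).map_surjective φ
  constructor
  · -- Kernel
    obtain ⟨B₁, β, hB₁, hβ⟩ := exists_rightApprox hX B
    obtain ⟨K, d, h, hT⟩ := distinguished_cocone_triangle₁ (biprod.desc f β)
    refine ⟨K, (quotFunctor X).map (d ≫ biprod.fst), ?_, ?_⟩
    · rw [← Functor.map_comp, quot_eq_zero_iff hXa]
      have h0 : d ≫ biprod.desc f β = 0 := tri_zero₁₂ hT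
      have hff : biprod.fst ≫ f = biprod.desc f β - biprod.snd ≫ β := by
        apply biprod.hom_ext' <;> simp
      have : (d ≫ biprod.fst) ≫ f = -((d ≫ biprod.snd) ≫ β) := by
        rw [Category.assoc, hff, Preadditive.comp_sub, ← Category.assoc, h0]
        simp
      rw [this]
      exact FactorsThru.neg ⟨B₁, d ≫ biprod.snd, β, hB₁, rfl⟩
    · intro Z u hu
      obtain ⟨u₀, rfl⟩ := (quotFunctor X).map_surjective u
      rw [← Functor.map_comp, quot_eq_zero_iff hXa] at hu
      obtain ⟨X', s, t, hX', hst⟩ := hu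
      obtain ⟨t', ht'⟩ := hβ X' hX' t
      have hlift : biprod.lift u₀ (-(s ≫ t')) ≫ biprod.desc f β = 0 := by
        rw [biprod.lift_desc, Preadditive.neg_comp, Category.assoc, ht', hst, add_neg_cancel]
      obtain ⟨v, hv⟩ := tri_coyoneda₂ hT _ hlift
      have hveq : v ≫ d ≫ biprod.fst = u₀ := by
        rw [← Category.assoc, ← hv, biprod.lift_fst]
      refine ⟨(quotFunctor X).map v, ?_, ?_⟩
      · dsimp only
        rw [← Functor.map_comp, hveq]
      · intro v' hv'
        obtain ⟨v₁, rfl⟩ := (quotFunctor X).map_surjective v'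
        rw [← Functor.map_comp] at hv'
        rw [quot_eq_iff hXa]
        apply ker_mono hX hB₁ hβ hT
        have : (v₁ - v) ≫ d ≫ biprod.fst = v₁ ≫ (d ≫ biprod.fst) - u₀ := by
          rw [Preadditive.sub_comp, hveq]
        rw [this]
        rw [← quot_eq_iff hXa, hv']
      -- done
  · -- Cokernel
    obtain ⟨W₀, W₁, a, bb, α, hW₀, hW₁, hTα⟩ := exists_approx_triangle hX A
    obtain ⟨Cf, g', h, hT⟩ := distinguished_cocone_triangle (biprod.lift f α)
    refine ⟨Cf, (quotFunctor X).map (biprod.inl ≫ g'), ?_, ?_⟩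
    · rw [← Functor.map_comp, quot_eq_zero_iff hXa]
      have h0 : biprod.lift f α ≫ g' = 0 := tri_zero₁₂ hT
      have hff : f ≫ biprod.inl = biprod.lift f α - α ≫ biprod.inr := by
        apply biprod.hom_ext <;> simp
      have : f ≫ biprod.inl ≫ g' = -(α ≫ biprod.inr ≫ g') := by
        rw [← Category.assoc, hff, Preadditive.sub_comp, Category.assoc, h0]
        simp
      rw [this]
      exact FactorsThru.neg ⟨W₀, α, biprod.inr ≫ g', hW₀, rfl⟩
    · intro Z u hu
      obtain ⟨u₀, rfl⟩ := (quotFunctor X).map_surjective u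
      rw [← Functor.map_comp, quot_eq_zero_iff hXa] at hu
      obtain ⟨X', s, t, hX', hst⟩ := hu
      obtain ⟨s', hs'⟩ := leftApprox_property hX hW₁ hTα hX' s
      have hdesc : biprod.lift f α ≫ biprod.desc u₀ (-(s' ≫ t)) = 0 := by
        rw [biprod.lift_desc, Preadditive.comp_neg, ← Category.assoc, hs', hst, add_neg_cancel]
      obtain ⟨v, hv⟩ := tri_yoneda₂ hT _ hdesc
      have hveq : (biprod.inl ≫ g') ≫ v = u₀ := by
        rw [Category.assoc, ← hv, biprod.inl_desc]
      refine ⟨(quotFunctor X).map v, ?_, ?_⟩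
      · dsimp only
        rw [← Functor.map_comp, hveq]
      · intro v' hv'
        obtain ⟨v₁, rfl⟩ := (quotFunctor X).map_surjective v'
        rw [← Functor.map_comp] at hv'
        rw [quot_eq_iff hXa]
        apply coker_epi hX hW₀ hW₁ hTα hT
        have : biprod.inl ≫ g' ≫ (v₁ - v) = (biprod.inl ≫ g') ≫ v₁ - u₀ := by
          rw [Preadditive.comp_sub, Preadditive.comp_sub, ← Category.assoc, ← Category.assoc, hveq]
        rw [this]
        rw [← quot_eq_iff hXa, hv']
end
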